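/- There exists a constant $C>0$ such that for all $n\ge 2$, the proportion of permutations $\sigma\in S_n$ whose cycle decomposition contains a cycle of prime length $p$ with $p> n/2$ is at most $C/\log n$. -/

import Mathlib

open Equiv Finset MulAction

/-- The number of cycles of length `i` in the cycle decomposition of `σ`
(cycles of length `1` being fixed points). -/
def cycleCount {n : ℕ} (σ : Equiv.Perm (Fin n)) (i : ℕ) : ℕ :=
  if i = 1 then (Finset.univ.filter fun x => σ x = x).card
  else σ.cycleType.count i

variable {n p : ℕ}

lemma card_fix (s : Finset (Fin n)) :
    (univ.filter fun f : Perm (Fin n) => ∀ a ∈ s, f a = a).card = (n - s.card).factorial := by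
  classical
  rw [← Fintype.card_subtype]
  have e1 : {f : Perm (Fin n) // ∀ a ∈ s, f a = a} ≃ {f : Perm (Fin n) // ∀ a, ¬(a ∉ s) → f a = a} :=
    Equiv.subtypeEquivRight (by intro f; simp [not_not])
  have e2 := (Equiv.Perm.subtypeEquivSubtypePerm (fun a : Fin n => a ∉ s))
  rw [Fintype.card_congr (e1.trans e2.symm), Fintype.card_perm, Fintype.card_subtype_compl,
    Fintype.card_fin, Fintype.card_coe]

lemma stab_card_ge (hp : p.Prime) (c₀ : Perm (Fin n)) (hc : c₀.IsCycle)
    (hcard : c₀.support.card = p) :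
    p * (n - p).factorial ≤ Nat.card (stabilizer (ConjAct (Perm (Fin n))) c₀) := by
  classical
  set K := {f : Perm (Fin n) // ∀ a ∈ c₀.support, f a = a} with hK
  have hdisj : ∀ f : K, (f : Perm (Fin n)).Disjoint c₀ := by
    intro f x
    by_cases hx : x ∈ c₀.support
    · exact Or.inl (f.2 x hx)
    · exact Or.inr (by simpa using Equiv.Perm.notMem_support.1 hx)
  have hcomm : ∀ (i : Fin p) (f : K), Commute (c₀ ^ (i : ℕ) * (f : Perm (Fin n))) c₀ :=
    fun i f => Commute.mul_left (Commute.pow_left rfl i) (hdisj f).commute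
  let φ : Fin p × K → stabilizer (ConjAct (Perm (Fin n))) c₀ := fun x =>
    ⟨ConjAct.toConjAct (c₀ ^ (x.1 : ℕ) * (x.2 : Perm (Fin n))), by
      rw [mem_stabilizer_iff, ConjAct.smul_def, ConjAct.ofConjAct_toConjAct,
        (hcomm x.1 x.2).eq, mul_assoc]
      group⟩
  have hφ : Function.Injective φ := by
    rintro ⟨i, f⟩ ⟨j, g⟩ h
    have h' : c₀ ^ (i : ℕ) * (f : Perm (Fin n)) = c₀ ^ (j : ℕ) * (g : Perm (Fin n)) :=
      ConjAct.toConjAct.injective (Subtype.ext_iff.1 h)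
    obtain ⟨x, hx⟩ := Finset.card_pos.1 (by rw [hcard]; exact hp.pos : 0 < c₀.support.card)
    have hfx : (f : Perm (Fin n)) x = x := f.2 x hx
    have hgx : (g : Perm (Fin n)) x = x := g.2 x hx
    have hpow : (c₀ ^ (i : ℕ)) x = (c₀ ^ (j : ℕ)) x := by
      have := congrArg (fun σ : Perm (Fin n) => σ x) h'
      simpa [Perm.mul_apply, hfx, hgx] using this
    have main : ∀ a b : ℕ, a ≤ b → b < p → (c₀ ^ a) x = (c₀ ^ b) x → a = b := by
      intro a b hab hbp he
      by_contra hne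
      have hm : (c₀ ^ (b - a)) x = x := by
        apply (Equiv.injective (c₀ ^ a))
        rw [← Perm.mul_apply, ← pow_add, Nat.add_sub_cancel' hab]
        exact he.symm
      have hm1 : 0 < b - a := Nat.sub_pos_of_lt (lt_of_le_of_ne hab hne)
      have hm2 : b - a < p := lt_of_le_of_lt (Nat.sub_le _ _) hbp
      have hcop : Nat.Coprime (b - a) (orderOf c₀) := by
        rw [hc.orderOf, hcard]
        exact (hp.coprime_iff_not_dvd.2 (Nat.not_dvd_of_pos_of_lt hm1 hm2)).symm
      rw [← Equiv.Perm.support_pow_coprime hcop] at hx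
      exact (Equiv.Perm.mem_support.1 hx) hm
    have hij : (i : ℕ) = (j : ℕ) := by
      rcases le_total (i : ℕ) (j : ℕ) with hle | hle
      · exact main _ _ hle j.2 hpow
      · exact (main _ _ hle i.2 hpow.symm).symm
    have hij' : i = j := Fin.ext hij
    subst hij'
    exact Prod.ext rfl (Subtype.ext (mul_left_cancel h'))
  have hle := Fintype.card_le_of_injective φ hφ
  rw [Nat.card_eq_fintype_card]
  calc p * (n - p).factorial = Fintype.card (Fin p × K) := by
        rw [Fintype.card_prod, Fintype.card_fin]
        congr 1
        show (n - p).factorial = Fintype.card {f : Perm (Fin n) // ∀ a ∈ c₀.support, f a = a}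
        rw [Fintype.card_subtype, card_fix, hcard]
    _ ≤ _ := hle

lemma fiber_card_le (c : Perm (Fin n)) (hcard : c.support.card = p) :
    (univ.filter fun σ : Perm (Fin n) => c ∈ σ.cycleFactorsFinset).card ≤ (n - p).factorial := by
  classical
  rw [← hcard, ← card_fix c.support]
  apply Finset.card_le_card_of_injOn (fun σ => σ * c⁻¹)
  · intro σ hσ
    simp only [mem_coe, mem_filter, mem_univ, true_and] at hσ ⊢
    intro a ha
    have h1 := (Equiv.Perm.mem_cycleFactorsFinset_iff.1 hσ).2
    have ha' : c⁻¹ a ∈ c.support := by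
      rw [← Equiv.Perm.apply_mem_support (f := c)]; simpa using ha
    have := h1 (c⁻¹ a) ha'
    simp only [Perm.mul_apply]
    rw [← this]
    simp
  · intro a _ b _ h
    simpa using mul_right_cancel h

lemma count_perms_with_pcycle (hp : p.Prime) :
    p * (univ.filter fun σ : Perm (Fin n) => p ∈ σ.cycleType).card ≤ n.factorial := by
  classical
  obtain ⟨C, hCmem⟩ : ∃ C : Finset (Perm (Fin n)),
      ∀ c, c ∈ C ↔ (c.IsCycle ∧ c.support.card = p) :=
    ⟨univ.filter fun c => c.IsCycle ∧ c.support.card = p, by simp⟩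
  have hsub : (univ.filter fun σ : Perm (Fin n) => p ∈ σ.cycleType) ⊆
      C.biUnion (fun c => univ.filter fun σ : Perm (Fin n) => c ∈ σ.cycleFactorsFinset) := by
    intro σ hσ
    simp only [mem_filter, mem_univ, true_and] at hσ
    rw [Equiv.Perm.cycleType_def, Multiset.mem_map] at hσ
    obtain ⟨c, hcmem, hcp⟩ := hσ
    have hcmem' : c ∈ σ.cycleFactorsFinset := hcmem
    refine Finset.mem_biUnion.2 ⟨c, ?_, ?_⟩
    · exact (hCmem c).2 ⟨(Equiv.Perm.mem_cycleFactorsFinset_iff.1 hcmem').1, hcp⟩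
    · simp [hcmem']
  rcases C.eq_empty_or_nonempty with hC | ⟨c₀, hc₀⟩
  · have := Finset.card_le_card hsub
    rw [hC, Finset.biUnion_empty, Finset.card_empty, Nat.le_zero] at this
    rw [this, Nat.mul_zero]
    exact Nat.zero_le _
  · obtain ⟨hc₀cyc, hc₀card⟩ := (hCmem c₀).1 hc₀
    have h1 : (univ.filter fun σ : Perm (Fin n) => p ∈ σ.cycleType).card ≤
        C.card * (n - p).factorial := by
      calc (univ.filter fun σ : Perm (Fin n) => p ∈ σ.cycleType).card
          ≤ (C.biUnion (fun c => univ.filter fun σ : Perm (Fin n) =>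
              c ∈ σ.cycleFactorsFinset)).card := Finset.card_le_card hsub
        _ ≤ ∑ c ∈ C, (univ.filter fun σ : Perm (Fin n) => c ∈ σ.cycleFactorsFinset).card :=
            Finset.card_biUnion_le
        _ ≤ ∑ _c ∈ C, (n - p).factorial := Finset.sum_le_sum fun c hc =>
            fiber_card_le c ((hCmem c).1 hc).2
        _ = C.card * (n - p).factorial := by rw [Finset.sum_const, smul_eq_mul]
    have h2 : C.card ≤ Nat.card (orbit (ConjAct (Perm (Fin n))) c₀) := by
      have hsub2 : (↑C : Set (Perm (Fin n))) ⊆ orbit (ConjAct (Perm (Fin n))) c₀ := by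
        intro c hc
        obtain ⟨hc1, hc2⟩ := (hCmem c).1 hc
        rw [ConjAct.mem_orbit_conjAct]
        apply Equiv.Perm.isConj_of_cycleType_eq
        rw [hc1.cycleType, hc₀cyc.cycleType, hc2, hc₀card]
      calc (C.card : ℕ) = (↑C : Set (Perm (Fin n))).ncard := (Set.ncard_coe_finset C).symm
        _ ≤ (orbit (ConjAct (Perm (Fin n))) c₀).ncard := Set.ncard_le_ncard hsub2 (Set.toFinite _)
        _ = Nat.card (orbit (ConjAct (Perm (Fin n))) c₀) := (Nat.card_coe_set_eq _).symm
    have h3 : Nat.card (orbit (ConjAct (Perm (Fin n))) c₀) *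
        Nat.card (stabilizer (ConjAct (Perm (Fin n))) c₀) = n.factorial := by
      rw [← Nat.card_prod, Nat.card_congr (orbitProdStabilizerEquivGroup _ c₀),
        Nat.card_congr ConjAct.toConjAct.toEquiv.symm, Nat.card_eq_fintype_card,
        Fintype.card_perm, Fintype.card_fin]
    calc p * (univ.filter fun σ : Perm (Fin n) => p ∈ σ.cycleType).card
        ≤ p * (C.card * (n - p).factorial) := Nat.mul_le_mul_left _ h1
      _ = C.card * (p * (n - p).factorial) := by ring
      _ ≤ Nat.card (orbit (ConjAct (Perm (Fin n))) c₀) *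
          Nat.card (stabilizer (ConjAct (Perm (Fin n))) c₀) :=
            Nat.mul_le_mul h2 (stab_card_ge hp c₀ hc₀cyc hc₀card)
      _ = n.factorial := h3

/-- There is a constant `C > 0` such that for all `n ≥ 2`, the proportion of `σ ∈ Sₙ`
containing a cycle of prime length `p > n/2` is at most `C / log n`. -/
theorem proportion_perms_with_large_prime_cycle_le :
    ∃ C : ℝ, 0 < C ∧ ∀ n : ℕ, 2 ≤ n →
      (Nat.card {σ : Equiv.Perm (Fin n) //
          ∃ p : ℕ, p.Prime ∧ n < 2 * p ∧ 1 ≤ cycleCount σ p} : ℝ) / (n.factorial : ℝ)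
        ≤ C / Real.log n := by
  classical
  refine ⟨16, by norm_num, ?_⟩
  intro n hn
  have hn0 : (0:ℝ) < n := by
    have : 0 < n := by omega
    exact_mod_cast this
  have hn1 : (1:ℝ) < n := by exact_mod_cast hn.trans_lt' one_lt_two
  have hlogpos : 0 < Real.log n := Real.log_pos hn1
  have hfacpos : (0:ℝ) < (n.factorial : ℝ) := by
    exact_mod_cast n.factorial_pos
  have hcard : Nat.card {σ : Equiv.Perm (Fin n) //
      ∃ p : ℕ, p.Prime ∧ n < 2 * p ∧ 1 ≤ cycleCount σ p}
      = (univ.filter fun σ : Perm (Fin n) =>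
          ∃ p : ℕ, p.Prime ∧ n < 2 * p ∧ 1 ≤ cycleCount σ p).card := by
    rw [Nat.card_eq_fintype_card, Fintype.card_subtype]
  rw [hcard]
  obtain ⟨F, hFmem⟩ : ∃ F : Finset ℕ, ∀ q, q ∈ F ↔ (q < n + 1 ∧ q.Prime ∧ n < 2 * q) :=
    ⟨(range (n+1)).filter fun q => q.Prime ∧ n < 2 * q, by simp [Finset.mem_filter]⟩
  -- union bound
  have hSsub : (univ.filter fun σ : Perm (Fin n) =>
        ∃ p : ℕ, p.Prime ∧ n < 2 * p ∧ 1 ≤ cycleCount σ p) ⊆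
      F.biUnion (fun p => univ.filter fun σ : Perm (Fin n) => p ∈ σ.cycleType) := by
    intro σ hσ
    simp only [mem_filter, mem_univ, true_and] at hσ
    obtain ⟨p, hp, h2p, hcc⟩ := hσ
    rw [cycleCount, if_neg hp.one_lt.ne'] at hcc
    have hmem : p ∈ σ.cycleType := Multiset.one_le_count_iff_mem.1 hcc
    have hpn : p ≤ n := by
      have h1 : p ≤ σ.cycleType.sum := Multiset.single_le_sum (fun x _ => Nat.zero_le x) _ hmem
      rw [Equiv.Perm.sum_cycleType] at h1
      exact h1.trans ((Finset.card_le_univ _).trans (by simp))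
    exact Finset.mem_biUnion.2 ⟨p, (hFmem p).2 ⟨by omega, hp, h2p⟩, by simp [hmem]⟩
  have hS1 : ((univ.filter fun σ : Perm (Fin n) =>
        ∃ p : ℕ, p.Prime ∧ n < 2 * p ∧ 1 ≤ cycleCount σ p).card : ℝ)
      ≤ F.card * (2 * n.factorial / n) := by
    have h0 : (univ.filter fun σ : Perm (Fin n) =>
        ∃ p : ℕ, p.Prime ∧ n < 2 * p ∧ 1 ≤ cycleCount σ p).card
        ≤ ∑ p ∈ F, (univ.filter fun σ : Perm (Fin n) => p ∈ σ.cycleType).card :=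
      (Finset.card_le_card hSsub).trans Finset.card_biUnion_le
    have h1 : ∀ p ∈ F, ((univ.filter fun σ : Perm (Fin n) => p ∈ σ.cycleType).card : ℝ)
        ≤ 2 * n.factorial / n := by
      intro p hpF
      obtain ⟨_, hp, h2p⟩ := (hFmem p).1 hpF
      have hcount := count_perms_with_pcycle (n := n) hp
      have : (n:ℝ) * (univ.filter fun σ : Perm (Fin n) => p ∈ σ.cycleType).card
          ≤ 2 * n.factorial := by
        have : n * (univ.filter fun σ : Perm (Fin n) => p ∈ σ.cycleType).card
            ≤ 2 * n.factorial := by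
          calc n * (univ.filter fun σ : Perm (Fin n) => p ∈ σ.cycleType).card
              ≤ 2 * p * (univ.filter fun σ : Perm (Fin n) => p ∈ σ.cycleType).card :=
                Nat.mul_le_mul_right _ (by omega)
            _ = 2 * (p * (univ.filter fun σ : Perm (Fin n) => p ∈ σ.cycleType).card) := by ring
            _ ≤ 2 * n.factorial := Nat.mul_le_mul_left _ hcount
        exact_mod_cast this
      rw [le_div_iff₀ hn0, mul_comm]
      exact this
    calc ((univ.filter fun σ : Perm (Fin n) =>
          ∃ p : ℕ, p.Prime ∧ n < 2 * p ∧ 1 ≤ cycleCount σ p).card : ℝ)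
        ≤ ∑ p ∈ F, ((univ.filter fun σ : Perm (Fin n) => p ∈ σ.cycleType).card : ℝ) := by
          exact_mod_cast h0
      _ ≤ ∑ _p ∈ F, (2 * (n.factorial : ℝ) / n) := Finset.sum_le_sum h1
      _ = F.card * (2 * n.factorial / n) := by rw [Finset.sum_const, nsmul_eq_mul]
  rcases lt_or_ge n 4 with hn4 | hn4
  · -- small case : LHS ≤ 1 ≤ 16 / log n
    have hle1 : ((univ.filter fun σ : Perm (Fin n) =>
        ∃ p : ℕ, p.Prime ∧ n < 2 * p ∧ 1 ≤ cycleCount σ p).card : ℝ) / n.factorial ≤ 1 := by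
      rw [div_le_one hfacpos]
      have := Finset.card_le_univ (univ.filter fun σ : Perm (Fin n) =>
        ∃ p : ℕ, p.Prime ∧ n < 2 * p ∧ 1 ≤ cycleCount σ p)
      have h2 : Fintype.card (Perm (Fin n)) = n.factorial := by
        rw [Fintype.card_perm, Fintype.card_fin]
      rw [h2] at this
      exact_mod_cast this
    refine hle1.trans ?_
    rw [le_div_iff₀ hlogpos, one_mul]
    have := Real.log_le_sub_one_of_pos hn0
    have hn3 : (n:ℝ) ≤ 3 := by exact_mod_cast Nat.lt_succ_iff.1 hn4
    linarith
  · -- large case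
    have hn0' : (0:ℝ) < (n:ℝ)/2 := by linarith
    have hn4' : (4:ℝ) ≤ n := by exact_mod_cast hn4
    -- prime counting via primorial
    have hprod : ∏ p ∈ F, p ≤ 4 ^ n := by
      have hsub : F ⊆ (range (n+1)).filter Nat.Prime := by
        intro q hq
        obtain ⟨h1, h2, _⟩ := (hFmem q).1 hq
        simp [Finset.mem_filter, Finset.mem_range, h1, h2]
      calc ∏ p ∈ F, p ≤ ∏ p ∈ (range (n+1)).filter Nat.Prime, p :=
            Finset.prod_le_prod_of_subset_of_one_le' hsub
              (fun i hi _ => (Finset.mem_filter.1 hi).2.one_lt.le)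
        _ = primorial n := rfl
        _ ≤ 4 ^ n := primorial_le_4_pow n
    have hreal : ((n:ℝ)/2) ^ F.card ≤ 4 ^ n := by
      calc ((n:ℝ)/2) ^ F.card = ∏ _p ∈ F, ((n:ℝ)/2) := by
            rw [Finset.prod_const]
        _ ≤ ∏ p ∈ F, (p:ℝ) := Finset.prod_le_prod (fun _ _ => hn0'.le)
            (fun p hp => by
              have := ((hFmem p).1 hp).2.2
              have : (n:ℝ) < 2 * p := by exact_mod_cast this
              linarith)
        _ = ((∏ p ∈ F, p : ℕ) : ℝ) := by rw [Nat.cast_prod]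
        _ ≤ ((4 ^ n : ℕ) : ℝ) := by exact_mod_cast hprod
        _ = 4 ^ n := by push_cast; ring
    have hklog : (F.card : ℝ) * Real.log ((n:ℝ)/2) ≤ n * Real.log 4 := by
      have := Real.log_le_log (by positivity) hreal
      rwa [Real.log_pow, Real.log_pow] at this
    have hlog4 : Real.log 4 = 2 * Real.log 2 := by
      rw [show (4:ℝ) = 2^2 by norm_num, Real.log_pow]
      push_cast; ring
    have hlogn4 : Real.log 4 ≤ Real.log n := Real.log_le_log (by norm_num) hn4'
    have hhalf : Real.log n ≤ 2 * Real.log ((n:ℝ)/2) := by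
      rw [Real.log_div (by positivity) (by norm_num)]
      linarith [hlog4, hlogn4]
    have hklogn : (F.card : ℝ) * Real.log n ≤ 2 * n * Real.log 4 := by
      calc (F.card : ℝ) * Real.log n ≤ (F.card : ℝ) * (2 * Real.log ((n:ℝ)/2)) :=
            mul_le_mul_of_nonneg_left hhalf (Nat.cast_nonneg _)
        _ = 2 * ((F.card : ℝ) * Real.log ((n:ℝ)/2)) := by ring
        _ ≤ 2 * (n * Real.log 4) := by linarith [hklog]
        _ = 2 * n * Real.log 4 := by ring
    have hlog4le : Real.log 4 ≤ 3 := by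
      have := Real.log_le_sub_one_of_pos (show (0:ℝ) < 4 by norm_num)
      linarith
    rw [div_le_div_iff₀ hfacpos hlogpos]
    calc ((univ.filter fun σ : Perm (Fin n) =>
          ∃ p : ℕ, p.Prime ∧ n < 2 * p ∧ 1 ≤ cycleCount σ p).card : ℝ) * Real.log n
        ≤ (F.card * (2 * n.factorial / n)) * Real.log n :=
          mul_le_mul_of_nonneg_right hS1 hlogpos.le
      _ = (2 * n.factorial / n) * ((F.card : ℝ) * Real.log n) := by ring
      _ ≤ (2 * n.factorial / n) * (2 * n * Real.log 4) :=
          mul_le_mul_of_nonneg_left hklogn (by positivity)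
      _ = 4 * n.factorial * Real.log 4 := by
          field_simp
          ring
      _ ≤ 16 * n.factorial := by nlinarith [hfacpos, hlog4le]
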